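/- arXiv:math/0510314 — 7 statements merged into one kernel-verified Lean document; each statement's English description precedes it below -/
import Mathlib

section
/- Let (A, φ, T) be a strictly weak mixing C*-dynamical system and let z be a complex number with |z| = 1 and z ≠ 1. If x ∈ A satisfies T(x) = z·x, then x = 0. -/
open Filter Finset ComplexOrder

/-- A strictly weak mixing system has no eigenvectors with eigenvalue on the unit circle
other than 1. -/
theorem stmt2
    {A : Type*} [NormedRing A] [StarRing A] [CStarRing A] [NormedAlgebra ℂ A]
    [CompleteSpace A] [StarModule ℂ A] [PartialOrder A] [StarOrderedRing A]
    (φ : A →L[ℂ] ℂ) (T : A →L[ℂ] A)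
    (hφ1 : φ 1 = 1) (hφpos : ∀ x : A, 0 ≤ φ (star x * x))
    (hT1 : T 1 = 1)
    (hTcp : ∀ (n : ℕ) (a b : Fin n → A),
      0 ≤ ∑ i, ∑ j, star (b i) * T (star (a i) * a j) * b j)
    (hinv : ∀ x : A, φ (T x) = φ x)
    (hmix : ∀ (ψ : A →L[ℂ] ℂ) (x : A),
      Tendsto (fun n : ℕ =>
          (1 / (n : ℝ)) * ∑ k ∈ Finset.range n, ‖ψ ((T ^ k) x) - ψ 1 * φ x‖)
        atTop (nhds 0))
    (z : ℂ) (hz : ‖z‖ = 1) (hz1 : z ≠ 1)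
    (x : A) (hx : T x = z • x) : x = 0 := by
  -- φ x = 0
  have hφx : φ x = 0 := by
    have h := hinv x
    rw [hx, map_smul, smul_eq_mul] at h
    have : (z - 1) * φ x = 0 := by linear_combination h
    rcases mul_eq_zero.mp this with h' | h'
    · exact absurd (sub_eq_zero.mp h') hz1
    · exact h'
  -- T^k x = z^k • x
  have hpow : ∀ k : ℕ, (T ^ k) x = z ^ k • x := by
    intro k
    induction k with
    | zero => simp
    | succ k ih =>
      rw [pow_succ, ContinuousLinearMap.mul_apply, hx, map_smul, ih, smul_smul,
        pow_succ, mul_comm]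
  -- every functional vanishes on x
  have hψ : ∀ ψ : A →L[ℂ] ℂ, ψ x = 0 := by
    intro ψ
    have hm := hmix ψ x
    have heq : ∀ᶠ n : ℕ in atTop,
        (1 / (n : ℝ)) * ∑ k ∈ Finset.range n, ‖ψ ((T ^ k) x) - ψ 1 * φ x‖
          = ‖ψ x‖ := by
      filter_upwards [eventually_gt_atTop 0] with n hn
      have : ∀ k ∈ Finset.range n,
          ‖ψ ((T ^ k) x) - ψ 1 * φ x‖ = ‖ψ x‖ := by
        intro k _
        rw [hpow, map_smul, hφx, mul_zero, sub_zero, smul_eq_mul, norm_mul, norm_pow, hz,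
          one_pow, one_mul]
      rw [Finset.sum_congr rfl this, Finset.sum_const, Finset.card_range, nsmul_eq_mul]
      field_simp
    have hconst : Tendsto (fun _ : ℕ => ‖ψ x‖) atTop (nhds 0) :=
      hm.congr' heq
    have : ‖ψ x‖ = 0 := tendsto_nhds_unique tendsto_const_nhds hconst
    exact norm_eq_zero.mp this
  exact NormedSpace.eq_zero_of_forall_dual_eq_zero ℂ hψ
end

section
/- Let (A, φ, T) be a strictly weak mixing C*-dynamical system and let z be a complex number with |z| = 1 and z ≠ 1. If f is a bounded linear functional on A with f ∘ T = z·f, then f = 0. -/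
open Filter Finset ComplexOrder

/-- A strictly weak mixing system has no eigenfunctionals with eigenvalue on the unit circle
other than 1. -/
theorem stmt3
    {A : Type*} [NormedRing A] [StarRing A] [CStarRing A] [NormedAlgebra ℂ A]
    [CompleteSpace A] [StarModule ℂ A] [PartialOrder A] [StarOrderedRing A]
    (φ : A →L[ℂ] ℂ) (T : A →L[ℂ] A)
    (hφ1 : φ 1 = 1) (hφpos : ∀ x : A, 0 ≤ φ (star x * x))
    (hT1 : T 1 = 1)
    (hTcp : ∀ (n : ℕ) (a b : Fin n → A),
      0 ≤ ∑ i, ∑ j, star (b i) * T (star (a i) * a j) * b j)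
    (hinv : ∀ x : A, φ (T x) = φ x)
    (hmix : ∀ (ψ : A →L[ℂ] ℂ) (x : A),
      Tendsto (fun n : ℕ =>
          (1 / (n : ℝ)) * ∑ k ∈ Finset.range n, ‖ψ ((T ^ k) x) - ψ 1 * φ x‖)
        atTop (nhds 0))
    (z : ℂ) (hz : ‖z‖ = 1) (hz1 : z ≠ 1)
    (f : A →L[ℂ] ℂ) (hf : ∀ x : A, f (T x) = z * f x) : f = 0 := by
  have hf1 : f 1 = 0 := by
    have h := hf 1
    rw [hT1] at h
    have : (1 - z) * f 1 = 0 := by ring_nf; linear_combination h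
    rcases mul_eq_zero.1 this with h' | h'
    · exact absurd (by linear_combination -h') hz1
    · exact h'
  have hpow : ∀ (k : ℕ) (y : A), f ((T ^ k) y) = z ^ k * f y := by
    intro k
    induction k with
    | zero => intro y; simp
    | succ n ih =>
      intro y
      rw [pow_succ, ContinuousLinearMap.mul_apply, ih, hf, pow_succ]
      ring
  ext x
  have h := hmix f x
  have heq : ∀ n : ℕ, 1 ≤ n → (1 / (n : ℝ)) * ∑ k ∈ Finset.range n,
      ‖f ((T ^ k) x) - f 1 * φ x‖ = ‖f x‖ := by
    intro n hn
    have : ∀ k ∈ Finset.range n, ‖f ((T ^ k) x) - f 1 * φ x‖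
        = ‖f x‖ := by
      intro k _
      rw [hpow, hf1, zero_mul, sub_zero, norm_mul, norm_pow, hz, one_pow, one_mul]
    rw [Finset.sum_congr rfl this, Finset.sum_const, Finset.card_range, nsmul_eq_mul]
    have hn' : (n : ℝ) ≠ 0 := Nat.cast_ne_zero.2 (by omega)
    field_simp
  have : Tendsto (fun _ : ℕ => ‖f x‖) atTop (nhds 0) := by
    refine h.congr' ?_
    filter_upwards [eventually_ge_atTop 1] with n hn
    exact heq n hn
  have habs : ‖f x‖ = 0 := tendsto_nhds_unique tendsto_const_nhds this
  simpa using (norm_eq_zero.1 habs)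
end

section
/- Let T be a bounded linear map on a Banach space A, x ∈ A, and c ∈ A. Suppose that for every increasing sequence (k_n) of natural numbers with sup_n k_n/n < ∞, the averages (1/n)·∑_{m=0}^{n-1} T^{k_m}(x) converge in norm to c. Then for every bounded linear functional ψ on A, (1/n)·∑_{k=0}^{n-1} |ψ(T^k x) − ψ(c)| → 0 as n → ∞. -/
open Filter Finset

private lemma BH_count_sum (b : ℕ → ℝ) (p : ℕ → Prop) [DecidablePred p] (N : ℕ) :
    ∑ m ∈ Finset.range (Nat.count p N), b (Nat.nth p m)
      = ∑ k ∈ Finset.range N, (if p k then b k else 0) := by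
  induction N with
  | zero => simp
  | succ n ih =>
    rw [Finset.sum_range_succ, Nat.count_succ]
    by_cases hp : p n
    · rw [if_pos hp, Finset.sum_range_succ, ih, Nat.nth_count hp, if_pos hp]
    · rw [if_neg hp, if_neg hp, add_zero, add_zero, ih]

private lemma BH_density (b : ℕ → ℝ)
    (H : ∀ k : ℕ → ℕ, StrictMono k → (∃ C : ℝ, ∀ n : ℕ, (k n : ℝ) ≤ C * (n + 1)) →
      Tendsto (fun n : ℕ => (1 / (n : ℝ)) * ∑ m ∈ Finset.range n, b (k m)) atTop (nhds 0))
    (p : ℕ → Prop) [DecidablePred p] (hcnt : ∀ N, N ≤ 2 * Nat.count p N + 1) :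
    Tendsto (fun N : ℕ => (1 / (N : ℝ)) * ∑ k ∈ Finset.range N, (if p k then b k else 0))
      atTop (nhds 0) := by
  have hinf : (setOf p).Infinite := by
    by_contra hfin
    rw [Set.not_infinite] at hfin
    have h1 : Nat.count p (2 * hfin.toFinset.card + 2) ≤ hfin.toFinset.card :=
      Nat.count_le_card hfin (2 * hfin.toFinset.card + 2)
    have h2 := hcnt (2 * hfin.toFinset.card + 2)
    omega
  have hmono : StrictMono (Nat.nth p) := Nat.nth_strictMono hinf
  have hbound : ∀ n : ℕ, (Nat.nth p n : ℝ) ≤ 2 * (n + 1) := by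
    intro n
    have h1 := hcnt (Nat.nth p n)
    rw [Nat.count_nth_of_infinite hinf] at h1
    have h1' : Nat.nth p n ≤ 2 * n + 1 := h1
    have h2 : (Nat.nth p n : ℝ) ≤ 2 * (n : ℝ) + 1 := by
      have := Nat.cast_le (α := ℝ).2 h1'
      push_cast at this
      linarith
    linarith
  have hf := H (Nat.nth p) hmono ⟨2, hbound⟩
  have hcnt_top : Tendsto (fun N => Nat.count p N) atTop atTop := by
    apply tendsto_atTop_atTop.2
    intro M
    refine ⟨2 * M + 1, fun N hN => ?_⟩
    have := hcnt N
    omega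
  have hcomp : Tendsto (fun N => (1 / (Nat.count p N : ℝ)) *
      ∑ m ∈ Finset.range (Nat.count p N), b (Nat.nth p m)) atTop (nhds 0) :=
    hf.comp hcnt_top
  have habs : Tendsto (fun N => ‖(1 / (Nat.count p N : ℝ)) *
      ∑ m ∈ Finset.range (Nat.count p N), b (Nat.nth p m)‖) atTop (nhds 0) := by
    have := hcomp.norm
    rwa [norm_zero] at this
  refine squeeze_zero_norm (fun N => ?_) habs
  rw [← BH_count_sum b p N]
  rcases Nat.eq_zero_or_pos (Nat.count p N) with h0 | hpos
  · simp [h0]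
  · have hle : Nat.count p N ≤ N := Nat.count_le p
    have hN : 0 < N := lt_of_lt_of_le hpos hle
    rw [norm_mul, norm_mul]
    apply mul_le_mul_of_nonneg_right _ (norm_nonneg _)
    rw [Real.norm_eq_abs, Real.norm_eq_abs, abs_of_nonneg (by positivity),
      abs_of_nonneg (by positivity)]
    apply one_div_le_one_div_of_le
    · exact_mod_cast hpos
    · exact_mod_cast hle

private lemma BH_countOE : ∀ N : ℕ, Nat.count (fun k => Odd k) N = N / 2 ∧
    Nat.count (fun k => Even k) N = (N + 1) / 2 := by
  intro N
  induction N with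
  | zero => simp
  | succ n ih =>
    obtain ⟨ih1, ih2⟩ := ih
    rw [Nat.count_succ, Nat.count_succ, ih1, ih2]
    rcases Nat.even_or_odd n with he | ho
    · have hno : ¬ Odd n := by simpa [Nat.not_odd_iff_even] using he
      rw [if_neg hno, if_pos he]
      obtain ⟨m, rfl⟩ := he
      omega
    · have hne : ¬ Even n := by simpa [Nat.not_even_iff_odd] using ho
      rw [if_neg hne, if_pos ho]
      obtain ⟨m, rfl⟩ := ho
      omega

private lemma BH_real (b : ℕ → ℝ)
    (H : ∀ k : ℕ → ℕ, StrictMono k → (∃ C : ℝ, ∀ n : ℕ, (k n : ℝ) ≤ C * (n + 1)) →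
      Tendsto (fun n : ℕ => (1 / (n : ℝ)) * ∑ m ∈ Finset.range n, b (k m)) atTop (nhds 0)) :
    Tendsto (fun n : ℕ => (1 / (n : ℝ)) * ∑ k ∈ Finset.range n, |b k|) atTop (nhds 0) := by
  classical
  have hOE : ∀ N : ℕ, N ≤ 2 * Nat.count (fun k => Odd k) N + 1 ∧
      N ≤ 2 * Nat.count (fun k => Even k) N + 1 := by
    intro N
    obtain ⟨e1, e2⟩ := BH_countOE N
    rw [e1, e2]
    omega
  have hmonoP : ∀ (q r : ℕ → Prop) [DecidablePred q] [DecidablePred r],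
      (∀ k, q k → r k) → ∀ N, Nat.count q N ≤ Nat.count r N := by
    intro q r _ _ hqr N
    rw [Nat.count_eq_card_filter_range, Nat.count_eq_card_filter_range]
    apply Finset.card_le_card
    intro x hx
    simp only [Finset.mem_filter] at hx ⊢
    exact ⟨hx.1, hqr x hx.2⟩
  have h1 := BH_density b H (fun k => 0 < b k ∨ Odd k)
    (fun N => le_trans (hOE N).1 (by
      have := hmonoP (fun k => Odd k) (fun k => 0 < b k ∨ Odd k) (fun k hk => Or.inr hk) N
      omega))
  have h2 := BH_density b H (fun k => 0 < b k ∨ Even k)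
    (fun N => le_trans (hOE N).2 (by
      have := hmonoP (fun k => Even k) (fun k => 0 < b k ∨ Even k) (fun k hk => Or.inr hk) N
      omega))
  have h3 := BH_density b H (fun k => Odd k) (fun N => (hOE N).1)
  have h4 := BH_density b H (fun k => Even k) (fun N => (hOE N).2)
  have hpos : Tendsto (fun N : ℕ => (1 / (N : ℝ)) *
      ∑ k ∈ Finset.range N, (if 0 < b k then b k else 0)) atTop (nhds 0) := by
    have hcomb := (h1.sub h3).add (h2.sub h4)
    rw [show (0:ℝ) - 0 + (0 - 0) = 0 by ring] at hcomb
    apply hcomb.congr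
    intro N
    have : (1 / (N : ℝ)) * ∑ k ∈ Finset.range N, (if 0 < b k ∨ Odd k then b k else 0)
        - (1 / (N : ℝ)) * ∑ k ∈ Finset.range N, (if Odd k then b k else 0)
        + ((1 / (N : ℝ)) * ∑ k ∈ Finset.range N, (if 0 < b k ∨ Even k then b k else 0)
        - (1 / (N : ℝ)) * ∑ k ∈ Finset.range N, (if Even k then b k else 0))
        = (1 / (N : ℝ)) * ∑ k ∈ Finset.range N,
            ((if 0 < b k ∨ Odd k then b k else 0) - (if Odd k then b k else 0)
              + ((if 0 < b k ∨ Even k then b k else 0) - (if Even k then b k else 0))) := by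
      rw [Finset.sum_add_distrib, Finset.sum_sub_distrib, Finset.sum_sub_distrib]
      ring
    rw [this]
    congr 1
    apply Finset.sum_congr rfl
    intro k _
    by_cases hb : 0 < b k
    · rcases Nat.even_or_odd k with he | ho
      · have hno : ¬ Odd k := by simpa [Nat.not_odd_iff_even] using he
        rw [if_pos (Or.inl hb : 0 < b k ∨ Odd k), if_neg hno,
          if_pos (Or.inr he : 0 < b k ∨ Even k), if_pos he, if_pos hb]
        ring
      · have hne : ¬ Even k := by simpa [Nat.not_even_iff_odd] using ho
        rw [if_pos (Or.inl hb : 0 < b k ∨ Odd k), if_pos ho,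
          if_pos (Or.inl hb : 0 < b k ∨ Even k), if_neg hne, if_pos hb]
        ring
    · rcases Nat.even_or_odd k with he | ho
      · have hno : ¬ Odd k := by simpa [Nat.not_odd_iff_even] using he
        rw [if_neg (by tauto : ¬ (0 < b k ∨ Odd k)), if_neg hno,
          if_pos (Or.inr he : 0 < b k ∨ Even k), if_pos he, if_neg hb]
        ring
      · have hne : ¬ Even k := by simpa [Nat.not_even_iff_odd] using ho
        rw [if_pos (Or.inr ho : 0 < b k ∨ Odd k), if_pos ho,
          if_neg (by tauto : ¬ (0 < b k ∨ Even k)), if_neg hne, if_neg hb]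
        ring
  have hid : Tendsto (fun n : ℕ => (1 / (n : ℝ)) * ∑ k ∈ Finset.range n, b k)
      atTop (nhds 0) := by
    have := H (fun n => n) strictMono_id ⟨1, fun n => by push_cast; linarith⟩
    simpa using this
  have hcomb := (hpos.const_mul 2).sub hid
  rw [show (2:ℝ) * 0 - 0 = 0 by ring] at hcomb
  apply hcomb.congr
  intro N
  have hterm : ∑ k ∈ Finset.range N, |b k|
      = 2 * (∑ k ∈ Finset.range N, (if 0 < b k then b k else 0))
        - ∑ k ∈ Finset.range N, b k := by
    rw [Finset.mul_sum, ← Finset.sum_sub_distrib]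
    apply Finset.sum_congr rfl
    intro k _
    rcases lt_or_ge 0 (b k) with hb | hb
    · rw [if_pos hb, abs_of_pos hb]; ring
    · rw [if_neg (not_lt.2 hb), abs_of_nonpos hb]; ring
  rw [hterm]
  ring

/-- Blum–Hanson type: if for every increasing sequence (k_n) with sup k_n/n < ∞ the averages
(1/n)∑ T^{k_m} x converge in norm to c, then the Cesàro averages of |ψ(T^k x) − ψ(c)| tend
to 0 for every bounded functional ψ. -/
theorem stmt8
    {A : Type*} [NormedAddCommGroup A] [NormedSpace ℂ A] [CompleteSpace A]
    (T : A →L[ℂ] A) (x c : A)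
    (h : ∀ k : ℕ → ℕ, StrictMono k → (∃ C : ℝ, ∀ n : ℕ, (k n : ℝ) ≤ C * (n + 1)) →
      Tendsto (fun n : ℕ => (1 / (n : ℂ)) • ∑ m ∈ Finset.range n, (T ^ (k m)) x)
        atTop (nhds c)) :
    ∀ ψ : A →L[ℂ] ℂ,
      Tendsto (fun n : ℕ =>
          (1 / (n : ℝ)) * ∑ k ∈ Finset.range n, ‖ψ ((T ^ k) x) - ψ c‖)
        atTop (nhds 0) := by
  intro ψ
  set a : ℕ → ℂ := fun k => ψ ((T ^ k) x) - ψ c with ha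
  have keyC : ∀ k : ℕ → ℕ, StrictMono k → (∃ C : ℝ, ∀ n : ℕ, (k n : ℝ) ≤ C * (n + 1)) →
      Tendsto (fun n : ℕ => (1 / (n : ℂ)) * ∑ m ∈ Finset.range n, a (k m))
        atTop (nhds 0) := by
    intro k hk hb
    have h1 := h k hk hb
    have h2 : Tendsto (fun n : ℕ =>
        ψ ((1 / (n : ℂ)) • ∑ m ∈ Finset.range n, (T ^ (k m)) x)) atTop (nhds (ψ c)) :=
      (ψ.continuous.tendsto c).comp h1
    have h3 := h2.sub_const (ψ c)
    rw [sub_self] at h3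
    apply h3.congr'
    filter_upwards [eventually_ge_atTop 1] with n hn
    have hn' : (n : ℂ) ≠ 0 := by
      exact_mod_cast Nat.cast_ne_zero.2 (by omega)
    rw [map_smul, smul_eq_mul, map_sum]
    simp only [ha]
    rw [Finset.sum_sub_distrib, Finset.sum_const, Finset.card_range, nsmul_eq_mul, mul_sub]
    congr 1
    field_simp
  have hre : ∀ k : ℕ → ℕ, StrictMono k → (∃ C : ℝ, ∀ n : ℕ, (k n : ℝ) ≤ C * (n + 1)) →
      Tendsto (fun n : ℕ => (1 / (n : ℝ)) * ∑ m ∈ Finset.range n, (a (k m)).re)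
        atTop (nhds 0) := by
    intro k hk hb
    have h1 := (Complex.continuous_re.tendsto 0).comp (keyC k hk hb)
    rw [Complex.zero_re] at h1
    apply h1.congr
    intro n
    show ((1 / (n : ℂ)) * ∑ m ∈ Finset.range n, a (k m)).re = _
    rw [show (1 / (n : ℂ)) = ((1 / (n : ℝ) : ℝ) : ℂ) by push_cast; ring,
      Complex.re_ofReal_mul, Complex.re_sum]
  have him : ∀ k : ℕ → ℕ, StrictMono k → (∃ C : ℝ, ∀ n : ℕ, (k n : ℝ) ≤ C * (n + 1)) →
      Tendsto (fun n : ℕ => (1 / (n : ℝ)) * ∑ m ∈ Finset.range n, (a (k m)).im)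
        atTop (nhds 0) := by
    intro k hk hb
    have h1 := (Complex.continuous_im.tendsto 0).comp (keyC k hk hb)
    rw [Complex.zero_im] at h1
    apply h1.congr
    intro n
    show ((1 / (n : ℂ)) * ∑ m ∈ Finset.range n, a (k m)).im = _
    rw [show (1 / (n : ℂ)) = ((1 / (n : ℝ) : ℝ) : ℂ) by push_cast; ring,
      Complex.im_ofReal_mul, Complex.im_sum]
  have hRe := BH_real (fun k => (a k).re) hre
  have hIm := BH_real (fun k => (a k).im) him
  have hsum := hRe.add hIm
  rw [add_zero] at hsum
  have hsum' : Tendsto (fun n : ℕ => (1 / (n : ℝ)) *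
      ∑ k ∈ Finset.range n, (|(a k).re| + |(a k).im|)) atTop (nhds 0) := by
    apply hsum.congr
    intro n
    rw [← mul_add, ← Finset.sum_add_distrib]
  refine squeeze_zero (fun n => ?_) (fun n => ?_) hsum'
  · apply mul_nonneg (by positivity)
    exact Finset.sum_nonneg fun k _ => norm_nonneg _
  · apply mul_le_mul_of_nonneg_left _ (by positivity : (0:ℝ) ≤ 1 / (n : ℝ))
    apply Finset.sum_le_sum
    intro k _
    exact Complex.norm_le_abs_re_add_abs_im (a k)
end

section
/- Let (A, φ, T) and (B, φ₁, H) be state-preserving C*-dynamical systems, and suppose the tensor product system (A ⊗ B, φ ⊗ φ₁, T ⊗ H) is strictly weak mixing, i.e., (1/n)·∑_{k=0}^{n-1} |ω((T⊗H)^k(w)) − ω(1⊗1)·(φ⊗φ₁)(w)| → 0 for all w ∈ A ⊗ B and all ω ∈ (A ⊗ B)*. Then (A, φ, T) is strictly weak mixing. -/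
open Filter Finset ComplexOrder

/-- If the tensor product system (A ⊗ B, φ ⊗ φ₁, T ⊗ H) (the minimal C*-tensor product being
presented by the data `C`, `tmul`, `Φ`, `S`) is strictly weak mixing, then so is (A, φ, T). -/
theorem stmt12
    {A : Type*} [NormedRing A] [StarRing A] [CStarRing A] [NormedAlgebra ℂ A]
    [CompleteSpace A] [StarModule ℂ A] [PartialOrder A] [StarOrderedRing A]
    {B : Type*} [NormedRing B] [StarRing B] [CStarRing B] [NormedAlgebra ℂ B]
    [CompleteSpace B] [StarModule ℂ B] [PartialOrder B] [StarOrderedRing B]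
    {C : Type*} [NormedRing C] [StarRing C] [CStarRing C] [NormedAlgebra ℂ C]
    [CompleteSpace C] [StarModule ℂ C] [PartialOrder C] [StarOrderedRing C]
    (φ : A →L[ℂ] ℂ) (T : A →L[ℂ] A) (φ₁ : B →L[ℂ] ℂ) (H : B →L[ℂ] B)
    (hφ1 : φ 1 = 1) (hφpos : ∀ x : A, 0 ≤ φ (star x * x))
    (hT1 : T 1 = 1)
    (hTcp : ∀ (n : ℕ) (a b : Fin n → A),
      0 ≤ ∑ i, ∑ j, star (b i) * T (star (a i) * a j) * b j)
    (hinv : ∀ x : A, φ (T x) = φ x)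
    (hφ₁1 : φ₁ 1 = 1) (hφ₁pos : ∀ y : B, 0 ≤ φ₁ (star y * y))
    (hH1 : H 1 = 1)
    (hHcp : ∀ (n : ℕ) (a b : Fin n → B),
      0 ≤ ∑ i, ∑ j, star (b i) * H (star (a i) * a j) * b j)
    (hinv₁ : ∀ y : B, φ₁ (H y) = φ₁ y)
    -- the data presenting the minimal C*-tensor product A ⊗ B
    (tmul : A →L[ℂ] B →L[ℂ] C) (Φ : C →L[ℂ] ℂ) (S : C →L[ℂ] C)
    (htmul_one : tmul 1 1 = 1)
    (htmul_mul : ∀ (a b : A) (x y : B), tmul a x * tmul b y = tmul (a * b) (x * y))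
    (htmul_star : ∀ (a : A) (x : B), star (tmul a x) = tmul (star a) (star x))
    (htmul_norm : ∀ (a : A) (x : B), ‖tmul a x‖ = ‖a‖ * ‖x‖)
    (hdense : Dense (Submodule.span ℂ (Set.range fun p : A × B => tmul p.1 p.2) : Set C))
    (hmin : ∀ (ψ : A →L[ℂ] ℂ) (ρ : B →L[ℂ] ℂ), ∃ Ω : C →L[ℂ] ℂ,
      ‖Ω‖ ≤ ‖ψ‖ * ‖ρ‖ ∧ ∀ (a : A) (x : B), Ω (tmul a x) = ψ a * ρ x)
    (hΦ : ∀ (a : A) (x : B), Φ (tmul a x) = φ a * φ₁ x)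
    (hS : ∀ (a : A) (x : B), S (tmul a x) = tmul (T a) (H x))
    -- strict weak mixing of the tensor product system
    (hmixC : ∀ (w : C) (Ω : C →L[ℂ] ℂ),
      Tendsto (fun n : ℕ =>
          (1 / (n : ℝ)) * ∑ k ∈ Finset.range n, ‖Ω ((S ^ k) w) - Ω 1 * Φ w‖)
        atTop (nhds 0)) :
    -- conclusion: (A, φ, T) is strictly weak mixing
    ∀ (x : A) (ψ : A →L[ℂ] ℂ),
      Tendsto (fun n : ℕ =>
          (1 / (n : ℝ)) * ∑ k ∈ Finset.range n, ‖ψ ((T ^ k) x) - ψ 1 * φ x‖)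
        atTop (nhds 0) := by
  intro x ψ
  obtain ⟨Ω, -, hΩ⟩ := hmin ψ φ₁
  have hSk : ∀ k : ℕ, (S ^ k) (tmul x 1) = tmul ((T ^ k) x) 1 := by
    intro k
    induction k with
    | zero => simp
    | succ k ih =>
      rw [pow_succ', pow_succ']
      simp only [ContinuousLinearMap.mul_apply]
      rw [ih, hS, hH1]
  have key := hmixC (tmul x 1) Ω
  have h1 : Ω 1 = ψ 1 := by rw [← htmul_one, hΩ, hφ₁1, mul_one]
  have h2 : Φ (tmul x 1) = φ x := by rw [hΦ, hφ₁1, mul_one]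
  convert key using 4 with n k
  rw [hSk, hΩ, hφ₁1, mul_one, h1, h2]
end

section
/- Let (A, φ, T) be a state-preserving C*-dynamical system such that the tensor square system (A ⊗ A, φ ⊗ φ, T ⊗ T) is uniquely ergodic in the sense that (1/n)·∑_{k=0}^{n-1} (T⊗T)^k(w) converges in norm to (φ⊗φ)(w)·1 for all w ∈ A ⊗ A. Then (A, φ, T) is strictly weak mixing: for every x ∈ A and every bounded linear functional ψ on A, (1/n)·∑_{k=0}^{n-1} |ψ(T^k x) − ψ(1)·φ(x)| → 0. -/
open Filter Finset ComplexOrder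

/-- If the tensor square system (A ⊗ A, φ ⊗ φ, T ⊗ T) (the minimal C*-tensor product being
presented by the data `C`, `tmul`, `Φ`, `S`) is uniquely ergodic, then (A, φ, T) is strictly
weak mixing. -/
theorem stmt13
    {A : Type*} [NormedRing A] [StarRing A] [CStarRing A] [NormedAlgebra ℂ A]
    [CompleteSpace A] [StarModule ℂ A] [PartialOrder A] [StarOrderedRing A]
    {C : Type*} [NormedRing C] [StarRing C] [CStarRing C] [NormedAlgebra ℂ C]
    [CompleteSpace C] [StarModule ℂ C] [PartialOrder C] [StarOrderedRing C]
    (φ : A →L[ℂ] ℂ) (T : A →L[ℂ] A)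
    (hφ1 : φ 1 = 1) (hφpos : ∀ x : A, 0 ≤ φ (star x * x))
    (hT1 : T 1 = 1)
    (hTcp : ∀ (n : ℕ) (a b : Fin n → A),
      0 ≤ ∑ i, ∑ j, star (b i) * T (star (a i) * a j) * b j)
    (hinv : ∀ x : A, φ (T x) = φ x)
    -- the data presenting the minimal C*-tensor product A ⊗ A
    (tmul : A →L[ℂ] A →L[ℂ] C) (Φ : C →L[ℂ] ℂ) (S : C →L[ℂ] C)
    (htmul_one : tmul 1 1 = 1)
    (htmul_mul : ∀ a b x y : A, tmul a x * tmul b y = tmul (a * b) (x * y))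
    (htmul_star : ∀ a x : A, star (tmul a x) = tmul (star a) (star x))
    (htmul_norm : ∀ a x : A, ‖tmul a x‖ = ‖a‖ * ‖x‖)
    (hdense : Dense (Submodule.span ℂ (Set.range fun p : A × A => tmul p.1 p.2) : Set C))
    (hmin : ∀ ψ ρ : A →L[ℂ] ℂ, ∃ Ω : C →L[ℂ] ℂ,
      ‖Ω‖ ≤ ‖ψ‖ * ‖ρ‖ ∧ ∀ a x : A, Ω (tmul a x) = ψ a * ρ x)
    (hΦ : ∀ a x : A, Φ (tmul a x) = φ a * φ x)
    (hS : ∀ a x : A, S (tmul a x) = tmul (T a) (T x))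
    -- unique ergodicity of the tensor square system
    (hue : ∀ w : C,
      Tendsto (fun n : ℕ => (1 / (n : ℂ)) • ∑ k ∈ Finset.range n, (S ^ k) w)
        atTop (nhds (Φ w • (1 : C)))) :
    -- conclusion: (A, φ, T) is strictly weak mixing
    ∀ (x : A) (ψ : A →L[ℂ] ℂ),
      Tendsto (fun n : ℕ =>
          (1 / (n : ℝ)) * ∑ k ∈ Finset.range n, ‖ψ ((T ^ k) x) - ψ 1 * φ x‖)
        atTop (nhds 0) := by
  intro x ψ
  letI : CStarAlgebra A := { }
  -- T is positive
  have hTpos : ∀ a : A, 0 ≤ T (star a * a) := by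
    intro a
    have h := hTcp 1 (fun _ => a) (fun _ => 1)
    simpa using h
  have hTmono : ∀ b : A, 0 ≤ b → 0 ≤ T b := by
    intro b hb
    rw [StarOrderedRing.nonneg_iff] at hb
    induction hb using AddSubmonoid.closure_induction with
    | mem u hu => obtain ⟨s, rfl⟩ := hu; exact hTpos s
    | zero => simp
    | add u v _ _ hu hv => rw [map_add]; exact add_nonneg hu hv
  -- T preserves selfadjointness
  have hTsa : ∀ h : A, IsSelfAdjoint h → IsSelfAdjoint (T h) := by
    intro h hh
    have h1 : 0 ≤ algebraMap ℝ A ‖h‖ - h := sub_nonneg.2 hh.le_algebraMap_norm_self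
    have h2 : IsSelfAdjoint (T (algebraMap ℝ A ‖h‖ - h)) :=
      IsSelfAdjoint.of_nonneg (hTmono _ h1)
    have halg : T (algebraMap ℝ A ‖h‖) = ((‖h‖ : ℂ)) • (1 : A) := by
      rw [Algebra.algebraMap_eq_smul_one, ← algebraMap_smul ℂ (‖h‖) (1 : A), map_smul, hT1]
      rfl
    have h3 : IsSelfAdjoint (((‖h‖ : ℂ)) • (1 : A)) := by
      rw [IsSelfAdjoint, star_smul, star_one, Complex.star_def, Complex.conj_ofReal]
    rw [map_sub, halg] at h2
    simpa using h3.sub h2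
  -- T is star-preserving
  have hTstar : ∀ a : A, T (star a) = star (T a) := by
    intro a
    have hu : IsSelfAdjoint (T (a + star a)) := by
      refine hTsa _ ?_
      rw [IsSelfAdjoint, star_add, star_star, add_comm]
    have hv : IsSelfAdjoint (T (Complex.I • (a - star a))) := by
      refine hTsa _ ?_
      rw [IsSelfAdjoint, star_smul, star_sub, star_star, Complex.star_def, Complex.conj_I]
      module
    have key : star a = (2⁻¹ : ℂ) • ((a + star a) + Complex.I • (Complex.I • (a - star a))) := by
      rw [smul_smul, Complex.I_mul_I, neg_one_smul]
      module
    have key' : a = (2⁻¹ : ℂ) • ((a + star a) - Complex.I • (Complex.I • (a - star a))) := by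
      rw [smul_smul, Complex.I_mul_I, neg_one_smul]
      module
    calc T (star a) = (2⁻¹ : ℂ) • (T (a + star a) + Complex.I • T (Complex.I • (a - star a))) := by
          conv_lhs => rw [key, map_smul, map_add, map_smul]
      _ = star ((2⁻¹ : ℂ) • (T (a + star a) - Complex.I • T (Complex.I • (a - star a)))) := by
          rw [star_smul, star_sub, hu.star_eq, star_smul, hv.star_eq, Complex.star_def,
            Complex.conj_I, map_inv₀, Complex.conj_ofNat, neg_smul, sub_neg_eq_add]
      _ = star (T a) := by conv_rhs => rw [key', map_smul, map_sub, map_smul]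
  -- the centered element
  set y : A := x - φ x • 1 with hy
  have hTk1 : ∀ k : ℕ, (T ^ k) (1 : A) = 1 := by
    intro k
    induction k with
    | zero => simp
    | succ k ih => rw [pow_succ, ContinuousLinearMap.mul_apply, hT1, ih]
  have hφy : φ y = 0 := by
    simp [hy, hφ1]
  have hTky : ∀ k : ℕ, (T ^ k) y = (T ^ k) x - φ x • 1 := by
    intro k
    rw [hy, map_sub, map_smul, hTk1]
  have hTkstar : ∀ (k : ℕ) (a : A), (T ^ k) (star a) = star ((T ^ k) a) := by
    intro k
    induction k with
    | zero => simp
    | succ k ih =>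
      intro a
      rw [pow_succ, ContinuousLinearMap.mul_apply, ContinuousLinearMap.mul_apply, hTstar, ih]
  -- the conjugate functional
  let ρ : A →L[ℂ] ℂ :=
    { toFun := fun a => (starRingEnd ℂ) (ψ (star a))
      map_add' := by intro a b; simp [star_add]
      map_smul' := by intro c a; simp [star_smul]
      cont := Complex.continuous_conj.comp (ψ.continuous.comp continuous_star) }
  obtain ⟨Ω, -, hΩ⟩ := hmin ψ ρ
  set w : C := tmul y (star y) with hw
  have hSk : ∀ (k : ℕ) (a b : A), (S ^ k) (tmul a b) = tmul ((T ^ k) a) ((T ^ k) b) := by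
    intro k
    induction k with
    | zero => simp
    | succ k ih =>
      intro a b
      rw [pow_succ, ContinuousLinearMap.mul_apply, hS, ih]
      simp [pow_succ, ContinuousLinearMap.mul_apply]
  have hΩk : ∀ k : ℕ, Ω ((S ^ k) w) = (Complex.normSq (ψ ((T ^ k) y)) : ℂ) := by
    intro k
    rw [hw, hSk, hΩ, hTkstar]
    show ψ ((T ^ k) y) * (starRingEnd ℂ) (ψ (star (star ((T ^ k) y)))) = _
    rw [star_star, Complex.mul_conj]
  have hΦw : Φ w = 0 := by
    rw [hw, hΦ, hφy, zero_mul]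
  -- apply Ω to the ergodic average
  have h0 : Tendsto (fun n : ℕ => Ω ((1 / (n : ℂ)) • ∑ k ∈ Finset.range n, (S ^ k) w))
      atTop (nhds 0) := by
    have h := (Ω.continuous.tendsto (Φ w • 1)).comp (hue w)
    have hz : Ω (Φ w • (1 : C)) = 0 := by rw [hΦw, zero_smul, map_zero]
    rw [hz] at h
    exact h
  have h0' : Tendsto (fun n : ℕ =>
      ((1 / (n : ℝ)) * ∑ k ∈ Finset.range n, Complex.normSq (ψ ((T ^ k) y)) : ℝ))
      atTop (nhds 0) := by
    have hre := (Complex.continuous_re.tendsto _).comp h0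
    have heq : ∀ n : ℕ, ((1 / (n : ℝ)) * ∑ k ∈ Finset.range n, Complex.normSq (ψ ((T ^ k) y)) : ℝ)
        = (Ω ((1 / (n : ℂ)) • ∑ k ∈ Finset.range n, (S ^ k) w)).re := by
      intro n
      rw [map_smul, map_sum]
      have hsum : ∑ k ∈ Finset.range n, Ω ((S ^ k) w)
          = ((∑ k ∈ Finset.range n, Complex.normSq (ψ ((T ^ k) y)) : ℝ) : ℂ) := by
        rw [Complex.ofReal_sum]
        exact Finset.sum_congr rfl fun k _ => hΩk k
      rw [hsum, smul_eq_mul]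
      push_cast
      simp
    have hre0 : Tendsto (fun n : ℕ =>
        (Ω ((1 / (n : ℂ)) • ∑ k ∈ Finset.range n, (S ^ k) w)).re) atTop (nhds 0) := by
      exact hre
    simp only [heq]
    exact hre0
  -- Cauchy-Schwarz and squeeze
  have hgoal_eq : ∀ (k : ℕ), ‖ψ ((T ^ k) x) - ψ 1 * φ x‖
      = ‖ψ ((T ^ k) y)‖ := by
    intro k
    congr 1
    rw [hTky, map_sub, map_smul, smul_eq_mul]
    ring
  have hbnd : ∀ n : ℕ,
      (1 / (n : ℝ)) * ∑ k ∈ Finset.range n, ‖ψ ((T ^ k) x) - ψ 1 * φ x‖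
      ≤ Real.sqrt ((1 / (n : ℝ)) * ∑ k ∈ Finset.range n, Complex.normSq (ψ ((T ^ k) y))) := by
    intro n
    simp only [hgoal_eq]
    refine Real.le_sqrt_of_sq_le ?_
    rcases Nat.eq_zero_or_pos n with rfl | hn
    · simp
    have hnR : (0 : ℝ) < n := Nat.cast_pos.2 hn
    have hCS : (∑ k ∈ Finset.range n, ‖ψ ((T ^ k) y)‖) ^ 2
        ≤ (n : ℝ) * ∑ k ∈ Finset.range n, ‖ψ ((T ^ k) y)‖ ^ 2 := by
      have h := Finset.sum_mul_sq_le_sq_mul_sq (Finset.range n) (fun _ => (1 : ℝ))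
        (fun k => ‖ψ ((T ^ k) y)‖)
      simpa using h
    have hns : ∀ k : ℕ, ‖ψ ((T ^ k) y)‖ ^ 2 = Complex.normSq (ψ ((T ^ k) y)) := by
      intro k
      rw [Complex.sq_norm]
    calc ((1 / (n : ℝ)) * ∑ k ∈ Finset.range n, ‖ψ ((T ^ k) y)‖) ^ 2
        = (1 / (n : ℝ)) ^ 2 * (∑ k ∈ Finset.range n, ‖ψ ((T ^ k) y)‖) ^ 2 := by ring
      _ ≤ (1 / (n : ℝ)) ^ 2 * ((n : ℝ) * ∑ k ∈ Finset.range n, ‖ψ ((T ^ k) y)‖ ^ 2) := by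
          exact mul_le_mul_of_nonneg_left hCS (by positivity)
      _ = (1 / (n : ℝ)) * ∑ k ∈ Finset.range n, ‖ψ ((T ^ k) y)‖ ^ 2 := by
          field_simp
      _ = (1 / (n : ℝ)) * ∑ k ∈ Finset.range n, Complex.normSq (ψ ((T ^ k) y)) := by
          rw [Finset.sum_congr rfl fun k _ => hns k]
  have hsqrt : Tendsto (fun n : ℕ =>
      Real.sqrt ((1 / (n : ℝ)) * ∑ k ∈ Finset.range n, Complex.normSq (ψ ((T ^ k) y))))
      atTop (nhds 0) := by
    have h := (Real.continuous_sqrt.tendsto 0).comp h0'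
    rw [Real.sqrt_zero] at h
    exact h
  refine squeeze_zero (fun n => ?_) hbnd hsqrt
  have : (0 : ℝ) ≤ ∑ k ∈ Finset.range n, ‖ψ ((T ^ k) x) - ψ 1 * φ x‖ :=
    Finset.sum_nonneg fun k _ => norm_nonneg _
  positivity
end

section
/- Let (A, φ, T) be a state-preserving C*-dynamical system such that for every state-preserving uniquely ergodic C*-dynamical system (B, φ₁, H), the tensor product system (A ⊗ B, φ ⊗ φ₁, T ⊗ H) is uniquely ergodic. Then (A, φ, T) is strictly weak mixing. -/
open Filter Finset ComplexOrder

universe u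

/- ## Auxiliary instances: `ULift ℂ` is a C*-algebra -/

noncomputable instance : StarRing (ULift.{u} ℂ) where
  star x := ULift.up (star x.down)
  star_involutive x := congrArg ULift.up (star_star x.down)
  star_mul x y := congrArg ULift.up (star_mul x.down y.down)
  star_add x y := congrArg ULift.up (star_add x.down y.down)

@[simp] lemma ULift.down_star' (x : ULift.{u} ℂ) : (star x).down = star x.down := rfl

noncomputable instance : StarModule ℂ (ULift.{u} ℂ) where
  star_smul c x := congrArg ULift.up (star_smul c x.down)

instance : CStarRing (ULift.{u} ℂ) where
  norm_mul_self_le x := CStarRing.norm_mul_self_le x.down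

lemma Complex.exists_star_mul_self' {z : ℂ} (hz : 0 ≤ z) : ∃ s : ℂ, z = star s * s := by
  rw [Complex.le_def] at hz
  refine ⟨(Real.sqrt z.re : ℂ), ?_⟩
  rw [Complex.star_def, Complex.conj_ofReal, ← Complex.ofReal_mul,
    Real.mul_self_sqrt (by simpa using hz.1)]
  apply Complex.ext <;> simp [(hz.2).symm]

instance : StarOrderedRing (ULift.{u} ℂ) := by
  refine StarOrderedRing.of_nonneg_iff' (fun {x y} h z => ?_) (fun x => ?_)
  · exact add_le_add_right (α := ℂ) h z.down
  · constructor
    · intro hx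
      obtain ⟨s, hs⟩ := Complex.exists_star_mul_self' (show (0:ℂ) ≤ x.down from hx)
      exact ⟨ULift.up s, ULift.ext _ _ hs⟩
    · rintro ⟨s, rfl⟩
      exact (star_mul_self_nonneg s.down : (0:ℂ) ≤ _)

/- ## Auxiliary lemmas -/

section Aux
variable {A : Type*} [NormedRing A] [StarRing A] [NormedAlgebra ℂ A] [StarModule ℂ A]

lemma smul_cancel_aux {M : Type*} [AddCommGroup M] [Module ℂ M] {c : ℂ} (hc : c ≠ 0)
    {x y : M} (h : c • x = c • y) : x = y := by
  have := congrArg (fun w => c⁻¹ • w) h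
  simpa [smul_smul, inv_mul_cancel₀ hc] using this

/-- A positive functional on a C*-algebra is hermitian. -/
lemma phi_star_aux (φ : A →L[ℂ] ℂ) (hφpos : ∀ x : A, 0 ≤ φ (star x * x)) (x : A) :
    φ (star x) = starRingEnd ℂ (φ x) := by
  have him : ∀ z : A, (φ (star z * z)).im = 0 := by
    intro z
    have := (Complex.le_def.mp (hφpos z)).2
    simpa using this.symm
  have him1 : (φ 1).im = 0 := by
    have := him 1
    simpa using this
  have expand1 : φ (star (x + 1) * (x + 1))
      = φ (star x * x) + (φ (star x) + φ x) + φ 1 := by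
    have hexp : star (x + 1) * (x + 1) = star x * x + (star x + x) + 1 := by
      simp only [star_add, star_one, add_mul, mul_add, one_mul, mul_one]
      abel
    rw [hexp]
    simp [map_add]
  have expand2 : φ (star (x + Complex.I • 1) * (x + Complex.I • 1))
      = φ (star x * x) + (Complex.I * φ (star x) - Complex.I * φ x) + φ 1 := by
    have hexp : star (x + Complex.I • 1) * (x + Complex.I • 1)
        = star x * x + (Complex.I • star x - Complex.I • x) + 1 := by
      simp only [star_add, star_smul, star_one, Complex.star_def, Complex.conj_I,
        add_mul, mul_add, smul_mul_assoc, mul_smul_comm, one_mul, mul_one, neg_smul,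
        smul_add, smul_smul, neg_mul, Complex.I_mul_I, neg_neg, one_smul, smul_neg]
      abel
    rw [hexp]
    simp [map_add, map_sub, sub_eq_add_neg]
  have e1 : (φ (star x)).im + (φ x).im = 0 := by
    have h := him (x + 1)
    rw [expand1] at h
    simp only [Complex.add_im] at h
    have hx := him x
    linarith
  have e2 : (φ (star x)).re - (φ x).re = 0 := by
    have h := him (x + Complex.I • 1)
    rw [expand2] at h
    simp only [Complex.add_im, Complex.sub_im, Complex.mul_im, Complex.I_re, Complex.I_im] at h
    have hx := him x
    linarith
  apply Complex.ext
  · simpa [Complex.conj_re] using by linarith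
  · simpa [Complex.conj_im] using by linarith

/-- A linear map on a C*-algebra sending positive elements of the form `star a * a` to
nonnegative elements is star-preserving. -/
lemma T_star_aux [PartialOrder A] [StarOrderedRing A]
    (T : A →L[ℂ] A) (hTpos : ∀ a : A, 0 ≤ T (star a * a)) (a : A) :
    T (star a) = star (T a) := by
  have hsa : ∀ z : A, star (T (star z * z)) = T (star z * z) := fun z =>
    (IsSelfAdjoint.of_nonneg (hTpos z))
  have hsa1 : star (T 1) = T 1 := by
    have := hsa 1
    simpa using this
  have E1 : star (T (star a)) + star (T a) = T (star a) + T a := by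
    have h := hsa (a + 1)
    have hexp : star (a + 1) * (a + 1) = star a * a + (star a + a) + 1 := by
      simp only [star_add, star_one, add_mul, mul_add, one_mul, mul_one]; abel
    rw [hexp] at h
    simp only [map_add, star_add, hsa a, hsa1] at h
    exact add_left_cancel (add_right_cancel h)
  have E2 : Complex.I • (star (T a) - star (T (star a))) = Complex.I • (T (star a) - T a) := by
    have h := hsa (a + Complex.I • 1)
    have hexp : star (a + Complex.I • 1) * (a + Complex.I • 1)
        = star a * a + (Complex.I • star a - Complex.I • a) + 1 := by
      simp only [star_add, star_smul, star_one, Complex.star_def, Complex.conj_I,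
        add_mul, mul_add, smul_mul_assoc, mul_smul_comm, one_mul, mul_one, neg_smul,
        smul_add, smul_smul, neg_mul, Complex.I_mul_I, neg_neg, one_smul, smul_neg]
      abel
    rw [hexp] at h
    simp only [map_add, map_sub, map_smul, star_add, star_sub, star_smul,
      Complex.star_def, Complex.conj_I, hsa a, hsa1, neg_smul, sub_neg_eq_add] at h
    have h2 := add_left_cancel (add_right_cancel h)
    rw [smul_sub, smul_sub, sub_eq_neg_add]
    exact h2
  have E2' : star (T a) - star (T (star a)) = T (star a) - T a :=
    smul_cancel_aux Complex.I_ne_zero E2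
  have h3 : T (star a) + T (star a) = star (T a) + star (T a) := by
    have := congrArg₂ (· + ·) E1 E2'
    abel_nf at this ⊢
    exact this.symm
  have h4 : (2:ℂ) • T (star a) = (2:ℂ) • star (T a) := by
    rw [two_smul, two_smul]; exact h3
  exact smul_cancel_aux two_ne_zero h4

end Aux

set_option maxHeartbeats 1000000 in
/-- If for every state-preserving uniquely ergodic C*-dynamical system (B, φ₁, H) the tensor
product system (A ⊗ B, φ ⊗ φ₁, T ⊗ H) (minimal C*-tensor products being presented by data
`C`, `tmul`, `Φ`, `S`) is uniquely ergodic, then (A, φ, T) is strictly weak mixing.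
A concrete presentation (C₀, tmul₀, Φ₀, S₀) of the minimal tensor square A ⊗ A (which always
exists) is supplied as data. -/
theorem stmt14
    {A : Type u} [NormedRing A] [StarRing A] [CStarRing A] [NormedAlgebra ℂ A]
    [CompleteSpace A] [StarModule ℂ A] [PartialOrder A] [StarOrderedRing A]
    (φ : A →L[ℂ] ℂ) (T : A →L[ℂ] A)
    (hφ1 : φ 1 = 1) (hφpos : ∀ x : A, 0 ≤ φ (star x * x))
    (hT1 : T 1 = 1)
    (hTcp : ∀ (n : ℕ) (a b : Fin n → A),
      0 ≤ ∑ i, ∑ j, star (b i) * T (star (a i) * a j) * b j)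
    (hinv : ∀ x : A, φ (T x) = φ x)
    -- the main hypothesis: for every state-preserving uniquely ergodic system (B, φ₁, H),
    -- every presentation of the minimal tensor product system (A ⊗ B, φ ⊗ φ₁, T ⊗ H)
    -- is uniquely ergodic
    (h : ∀ (B : Type u) [NormedRing B] [StarRing B] [CStarRing B] [NormedAlgebra ℂ B]
        [CompleteSpace B] [StarModule ℂ B] [PartialOrder B] [StarOrderedRing B]
        (φ₁ : B →L[ℂ] ℂ) (H : B →L[ℂ] B),
      φ₁ 1 = 1 → (∀ y : B, 0 ≤ φ₁ (star y * y)) → H 1 = 1 →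
      (∀ (n : ℕ) (a b : Fin n → B),
        0 ≤ ∑ i, ∑ j, star (b i) * H (star (a i) * a j) * b j) →
      (∀ y : B, φ₁ (H y) = φ₁ y) →
      (∀ y : B, Tendsto (fun n : ℕ => (1 / (n : ℂ)) • ∑ k ∈ Finset.range n, (H ^ k) y)
        atTop (nhds (φ₁ y • (1 : B)))) →
      ∀ (C : Type u) [NormedRing C] [StarRing C] [CStarRing C] [NormedAlgebra ℂ C]
        [CompleteSpace C] [StarModule ℂ C] [PartialOrder C] [StarOrderedRing C]
        (tmul : A →L[ℂ] B →L[ℂ] C) (Φ : C →L[ℂ] ℂ) (S : C →L[ℂ] C),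
      tmul 1 1 = 1 →
      (∀ (a b : A) (x y : B), tmul a x * tmul b y = tmul (a * b) (x * y)) →
      (∀ (a : A) (x : B), star (tmul a x) = tmul (star a) (star x)) →
      (∀ (a : A) (x : B), ‖tmul a x‖ = ‖a‖ * ‖x‖) →
      Dense (Submodule.span ℂ (Set.range fun p : A × B => tmul p.1 p.2) : Set C) →
      (∀ (ψ : A →L[ℂ] ℂ) (ρ : B →L[ℂ] ℂ), ∃ Ω : C →L[ℂ] ℂ,
        ‖Ω‖ ≤ ‖ψ‖ * ‖ρ‖ ∧ ∀ (a : A) (x : B), Ω (tmul a x) = ψ a * ρ x) →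
      (∀ (a : A) (x : B), Φ (tmul a x) = φ a * φ₁ x) →
      (∀ (a : A) (x : B), S (tmul a x) = tmul (T a) (H x)) →
      ∀ w : C, Tendsto (fun n : ℕ => (1 / (n : ℂ)) • ∑ k ∈ Finset.range n, (S ^ k) w)
        atTop (nhds (Φ w • (1 : C))))
    -- a concrete presentation of the minimal C*-tensor product A ⊗ A
    {C₀ : Type u} [NormedRing C₀] [StarRing C₀] [CStarRing C₀] [NormedAlgebra ℂ C₀]
    [CompleteSpace C₀] [StarModule ℂ C₀] [PartialOrder C₀] [StarOrderedRing C₀]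
    (tmul₀ : A →L[ℂ] A →L[ℂ] C₀) (Φ₀ : C₀ →L[ℂ] ℂ) (S₀ : C₀ →L[ℂ] C₀)
    (h₀one : tmul₀ 1 1 = 1)
    (h₀mul : ∀ a b x y : A, tmul₀ a x * tmul₀ b y = tmul₀ (a * b) (x * y))
    (h₀star : ∀ a x : A, star (tmul₀ a x) = tmul₀ (star a) (star x))
    (h₀norm : ∀ a x : A, ‖tmul₀ a x‖ = ‖a‖ * ‖x‖)
    (h₀dense : Dense (Submodule.span ℂ (Set.range fun p : A × A => tmul₀ p.1 p.2) : Set C₀))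
    (h₀min : ∀ ψ ρ : A →L[ℂ] ℂ, ∃ Ω : C₀ →L[ℂ] ℂ,
      ‖Ω‖ ≤ ‖ψ‖ * ‖ρ‖ ∧ ∀ a x : A, Ω (tmul₀ a x) = ψ a * ρ x)
    (h₀Φ : ∀ a x : A, Φ₀ (tmul₀ a x) = φ a * φ x)
    (h₀S : ∀ a x : A, S₀ (tmul₀ a x) = tmul₀ (T a) (T x)) :
    -- conclusion: (A, φ, T) is strictly weak mixing
    ∀ (x : A) (ψ : A →L[ℂ] ℂ),
      Tendsto (fun n : ℕ =>
          (1 / (n : ℝ)) * ∑ k ∈ Finset.range n, ‖ψ ((T ^ k) x) - ψ 1 * φ x‖)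
        atTop (nhds 0) := by
  classical
  -- step 0: basic facts
  have hφstar : ∀ x : A, φ (star x) = starRingEnd ℂ (φ x) := phi_star_aux φ hφpos
  have hTpos : ∀ a : A, 0 ≤ T (star a * a) := by
    intro a
    have := hTcp 1 (fun _ => a) (fun _ => 1)
    simpa using this
  have hTstar : ∀ a : A, T (star a) = star (T a) := T_star_aux T hTpos
  have hTstarpow : ∀ (k : ℕ) (a : A), (T ^ k) (star a) = star ((T ^ k) a) := by
    intro k
    induction k with
    | zero => intro a; simp
    | succ n ih =>
      intro a
      rw [pow_succ, ContinuousLinearMap.mul_apply, ContinuousLinearMap.mul_apply, hTstar, ih]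
  -- step 1: (A, φ, T) is uniquely ergodic
  have uergA : ∀ w : A, Tendsto (fun n : ℕ => (1 / (n : ℂ)) • ∑ k ∈ Finset.range n, (T ^ k) w)
      atTop (nhds (φ w • (1:A))) := by
    set φ₁ : ULift.{u} ℂ →L[ℂ] ℂ :=
      (ContinuousLinearEquiv.ulift : ULift.{u} ℂ ≃L[ℂ] ℂ).toContinuousLinearMap with hφ₁
    have hφ₁app : ∀ z : ULift.{u} ℂ, φ₁ z = z.down := fun z => rfl
    have hφ₁norm : ‖φ₁‖ ≤ 1 := by
      refine ContinuousLinearMap.opNorm_le_bound _ zero_le_one (fun z => ?_)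
      rw [hφ₁app, one_mul]
      exact le_of_eq rfl
    set tm : A →L[ℂ] ULift.{u} ℂ →L[ℂ] A :=
      LinearMap.mkContinuous
        { toFun := fun a => φ₁.smulRight a
          map_add' := fun a b => by
            ext z
            simp [ContinuousLinearMap.smulRight_apply, smul_add]
          map_smul' := fun c a => by
            ext z
            simp only [ContinuousLinearMap.smulRight_apply, RingHom.id_apply,
              ContinuousLinearMap.coe_smul', Pi.smul_apply]
            rw [smul_comm] }
        1 (fun a => by
          rw [LinearMap.coe_mk, AddHom.coe_mk, ContinuousLinearMap.norm_smulRight_apply, one_mul]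
          exact mul_le_mul_of_nonneg_right hφ₁norm (norm_nonneg a) |>.trans (by rw [one_mul]))
        with htm
    have htmapp : ∀ (a : A) (z : ULift.{u} ℂ), tm a z = z.down • a := fun a z => rfl
    refine h (ULift.{u} ℂ) φ₁ 1 rfl ?_ rfl ?_ (fun y => rfl) ?_ A tm φ T ?_ ?_ ?_ ?_ ?_ ?_ ?_ ?_
    · -- positivity of φ₁
      intro y
      exact (star_mul_self_nonneg y.down : (0:ℂ) ≤ _)
    · -- complete positivity of H = 1
      intro n a b
      have key : ∀ i j, star (b i) * ((1 : ULift.{u} ℂ →L[ℂ] ULift.{u} ℂ) (star (a i) * a j)) * b j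
          = star (a i * b i) * (a j * b j) := by
        intro i j
        rw [ContinuousLinearMap.one_apply, star_mul]
        ring
      calc (0 : ULift.{u} ℂ) ≤ star (∑ i, a i * b i) * (∑ j, a j * b j) :=
            star_mul_self_nonneg _
        _ = (∑ i, star (a i * b i)) * (∑ j, a j * b j) := by rw [star_sum]
        _ = ∑ i, ∑ j, star (a i * b i) * (a j * b j) := Finset.sum_mul_sum _ _ _ _
        _ = ∑ i, ∑ j, star (b i) * ((1 : ULift.{u} ℂ →L[ℂ] ULift.{u} ℂ) (star (a i) * a j)) * b j := by
            simp_rw [key]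
    · -- unique ergodicity of H = 1
      intro y
      have hconst : φ₁ y • (1 : ULift.{u} ℂ) = y := by
        apply ULift.ext
        simp [hφ₁app]
      rw [hconst]
      refine Tendsto.congr' ?_ tendsto_const_nhds
      filter_upwards [eventually_ge_atTop 1] with n hn
      have hn' : (n : ℂ) ≠ 0 := Nat.cast_ne_zero.mpr (by omega)
      simp only [one_pow, ContinuousLinearMap.one_apply, Finset.sum_const, Finset.card_range]
      rw [← Nat.cast_smul_eq_nsmul ℂ n y, smul_smul, one_div, inv_mul_cancel₀ hn', one_smul]
    · -- tm 1 1 = 1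
      rw [htmapp]
      simp
    · -- multiplicativity
      intro a b x y
      rw [htmapp, htmapp, htmapp, smul_mul_smul_comm]
      rfl
    · -- star
      intro a x
      rw [htmapp, htmapp, star_smul]
      rfl
    · -- norm
      intro a x
      rw [htmapp, norm_smul]
      exact mul_comm _ _
    · -- density
      have hsp : (Submodule.span ℂ (Set.range fun p : A × ULift.{u} ℂ => tm p.1 p.2)) = ⊤ := by
        rw [Submodule.eq_top_iff']
        intro a
        apply Submodule.subset_span
        refine ⟨(a, ULift.up 1), ?_⟩
        show tm a (ULift.up 1) = a
        rw [htmapp]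
        simp
      rw [hsp, Submodule.top_coe]
      exact dense_univ
    · -- minimality
      intro ψ' ρ'
      refine ⟨ρ' 1 • ψ', ?_, ?_⟩
      · calc ‖ρ' 1 • ψ'‖ ≤ ‖ρ' 1‖ * ‖ψ'‖ := ContinuousLinearMap.opNorm_smul_le _ _
        _ ≤ (‖ρ'‖ * ‖(1 : ULift.{u} ℂ)‖) * ‖ψ'‖ :=
              mul_le_mul_of_nonneg_right (ρ'.le_opNorm 1) (norm_nonneg _)
        _ = ‖ψ'‖ * ‖ρ'‖ := by rw [norm_one]; ring
      · intro a z
        have hz : ρ' z = z.down * ρ' 1 := by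
          conv_lhs => rw [show z = z.down • (1 : ULift.{u} ℂ) from ULift.ext _ _ (by simp)]
          rw [map_smul, smul_eq_mul]
        rw [ContinuousLinearMap.smul_apply, htmapp, map_smul, hz, smul_eq_mul, smul_eq_mul]
        ring
    · -- Φ
      intro a z
      rw [htmapp, map_smul, hφ₁app, smul_eq_mul, mul_comm]
    · -- S
      intro a z
      rw [htmapp, map_smul, htmapp]
      rfl
  -- step 2: the tensor square is uniquely ergodic
  have uergC : ∀ w : C₀, Tendsto (fun n : ℕ => (1 / (n : ℂ)) • ∑ k ∈ Finset.range n, (S₀ ^ k) w)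
      atTop (nhds (Φ₀ w • (1:C₀))) :=
    h A φ T hφ1 hφpos hT1 hTcp hinv uergA C₀ tmul₀ Φ₀ S₀ h₀one h₀mul h₀star h₀norm h₀dense
      h₀min h₀Φ h₀S
  -- step 3: conclude strict weak mixing
  intro x ψ
  -- the conjugate functional ρ a = conj (ψ (star a))
  set ρ : A →L[ℂ] ℂ := LinearMap.mkContinuous
    { toFun := fun a => starRingEnd ℂ (ψ (star a))
      map_add' := fun a b => by simp [star_add, map_add]
      map_smul' := fun γ a => by
        simp only [star_smul, map_smul, smul_eq_mul, map_mul, RingHom.id_apply,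
          Complex.star_def, Complex.conj_conj] }
    ‖ψ‖ (fun a => by
      simp only [LinearMap.coe_mk, AddHom.coe_mk]
      calc ‖(starRingEnd ℂ) (ψ (star a))‖ = ‖ψ (star a)‖ := RCLike.norm_conj _
        _ ≤ ‖ψ‖ * ‖star a‖ := ψ.le_opNorm _
        _ = ‖ψ‖ * ‖a‖ := by rw [norm_star]) with hρdef
  have hρapp : ∀ a : A, ρ a = starRingEnd ℂ (ψ (star a)) := fun a => rfl
  obtain ⟨Ω, hΩn, hΩ⟩ := h₀min ψ ρ
  set c : ℂ := ψ 1 * φ x with hc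
  have hρT : ∀ k : ℕ, ρ ((T ^ k) (star x)) = starRingEnd ℂ (ψ ((T ^ k) x)) := by
    intro k
    rw [hρapp, hTstarpow, star_star]
  have hρ1 : ρ 1 = starRingEnd ℂ (ψ 1) := by rw [hρapp, star_one]
  have hS₀pow : ∀ k : ℕ, (S₀ ^ k) (tmul₀ x (star x)) = tmul₀ ((T ^ k) x) ((T ^ k) (star x)) := by
    intro k
    induction k with
    | zero => simp
    | succ n ih =>
      rw [pow_succ', ContinuousLinearMap.mul_apply, ih, h₀S, pow_succ']
      rfl
  -- first convergence fact
  have f1 : Tendsto (fun n : ℕ => (1/(n:ℂ)) * ∑ k ∈ Finset.range n, ψ ((T ^ k) x))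
      atTop (nhds c) := by
    have h1 := (ψ.continuous.tendsto (φ x • (1:A))).comp (uergA x)
    rw [map_smul, smul_eq_mul, mul_comm, ← hc] at h1
    exact h1.congr fun n => by
      rw [Function.comp_apply, map_smul, map_sum, smul_eq_mul]
  -- second convergence fact
  have f2 : Tendsto (fun n : ℕ =>
        (1/(n:ℂ)) * ∑ k ∈ Finset.range n, starRingEnd ℂ (ψ ((T ^ k) x)))
      atTop (nhds (starRingEnd ℂ c)) := by
    have h1 := (ρ.continuous.tendsto (φ (star x) • (1:A))).comp (uergA (star x))
    have hl : ρ (φ (star x) • (1:A)) = starRingEnd ℂ c := by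
      rw [map_smul, smul_eq_mul, hρ1, hφstar, hc, map_mul]
      ring
    rw [hl] at h1
    exact h1.congr fun n => by
      rw [Function.comp_apply, map_smul, map_sum, smul_eq_mul]
      congr 1
      exact Finset.sum_congr rfl fun k _ => hρT k
  -- third convergence fact
  have f3 : Tendsto (fun n : ℕ =>
        (1/(n:ℂ)) * ∑ k ∈ Finset.range n, ψ ((T ^ k) x) * starRingEnd ℂ (ψ ((T ^ k) x)))
      atTop (nhds (c * starRingEnd ℂ c)) := by
    have h1 := (Ω.continuous.tendsto (Φ₀ (tmul₀ x (star x)) • (1:C₀))).comp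
      (uergC (tmul₀ x (star x)))
    have hl : Ω (Φ₀ (tmul₀ x (star x)) • (1:C₀)) = c * starRingEnd ℂ c := by
      rw [map_smul, smul_eq_mul, h₀Φ, hφstar, ← h₀one, hΩ, hρ1, hc, map_mul]
      ring
    rw [hl] at h1
    exact h1.congr fun n => by
      rw [Function.comp_apply, map_smul, map_sum, smul_eq_mul]
      congr 1
      refine Finset.sum_congr rfl fun k _ => ?_
      rw [hS₀pow, hΩ, hρT]
  -- the complex Cesàro mean of |ψ(T^k x) - c|²
  set G : ℕ → ℂ := fun n => (1/(n:ℂ)) * ∑ k ∈ Finset.range n,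
    (ψ ((T ^ k) x) - c) * starRingEnd ℂ (ψ ((T ^ k) x) - c) with hG
  have hGlim : Tendsto G atTop (nhds 0) := by
    have hcomb : Tendsto (fun n : ℕ =>
        ((1/(n:ℂ)) * ∑ k ∈ Finset.range n, ψ ((T ^ k) x) * starRingEnd ℂ (ψ ((T ^ k) x)))
        - starRingEnd ℂ c * ((1/(n:ℂ)) * ∑ k ∈ Finset.range n, ψ ((T ^ k) x))
        - c * ((1/(n:ℂ)) * ∑ k ∈ Finset.range n, starRingEnd ℂ (ψ ((T ^ k) x)))
        + c * starRingEnd ℂ c)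
        atTop (nhds (c * starRingEnd ℂ c - starRingEnd ℂ c * c - c * starRingEnd ℂ c
          + c * starRingEnd ℂ c)) :=
      ((f3.sub (tendsto_const_nhds.mul f1)).sub (tendsto_const_nhds.mul f2)).add
        tendsto_const_nhds
    rw [show c * starRingEnd ℂ c - starRingEnd ℂ c * c - c * starRingEnd ℂ c
        + c * starRingEnd ℂ c = 0 by ring] at hcomb
    refine Tendsto.congr' ?_ hcomb
    filter_upwards [eventually_ge_atTop 1] with n hn
    have hn' : (n:ℂ) ≠ 0 := Nat.cast_ne_zero.mpr (by omega)
    have hsum : ∑ k ∈ Finset.range n,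
        (ψ ((T ^ k) x) - c) * starRingEnd ℂ (ψ ((T ^ k) x) - c)
        = (∑ k ∈ Finset.range n, ψ ((T ^ k) x) * starRingEnd ℂ (ψ ((T ^ k) x)))
          - starRingEnd ℂ c * (∑ k ∈ Finset.range n, ψ ((T ^ k) x))
          - c * (∑ k ∈ Finset.range n, starRingEnd ℂ (ψ ((T ^ k) x)))
          + (n : ℂ) * (c * starRingEnd ℂ c) := by
      rw [Finset.mul_sum, Finset.mul_sum, ← Finset.sum_sub_distrib, ← Finset.sum_sub_distrib]
      rw [show (n : ℂ) * (c * starRingEnd ℂ c)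
          = ∑ _k ∈ Finset.range n, c * starRingEnd ℂ c by
        rw [Finset.sum_const, Finset.card_range, nsmul_eq_mul]]
      rw [← Finset.sum_add_distrib]
      refine Finset.sum_congr rfl fun k _ => ?_
      rw [map_sub]
      ring
    show _ = (1/(n:ℂ)) * ∑ k ∈ Finset.range n,
      (ψ ((T ^ k) x) - c) * starRingEnd ℂ (ψ ((T ^ k) x) - c)
    rw [hsum]
    field_simp
  -- pass to real parts
  have habs : ∀ n : ℕ,
      (((1/(n:ℝ)) * ∑ k ∈ Finset.range n, (‖ψ ((T ^ k) x) - c‖)^2 : ℝ) : ℂ)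
        = G n := by
    intro n
    have hterm : ∀ z : ℂ, ((‖z‖^2 : ℝ) : ℂ) = z * starRingEnd ℂ z := by
      intro z
      rw [Complex.mul_conj]
      norm_cast
      exact Complex.sq_norm z
    rw [hG]
    push_cast
    congr 1
    refine Finset.sum_congr rfl fun k _ => ?_
    rw [← hterm]
    push_cast
    ring
  have hg : Tendsto (fun n : ℕ =>
      (1/(n:ℝ)) * ∑ k ∈ Finset.range n, (‖ψ ((T ^ k) x) - c‖)^2)
      atTop (nhds 0) := by
    have h1 := (Complex.continuous_re.tendsto 0).comp hGlim
    simp only [Complex.zero_re] at h1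
    exact h1.congr fun n => by
      rw [Function.comp_apply, ← habs n, Complex.ofReal_re]
  -- Cauchy–Schwarz bound and squeeze
  have hbound : ∀ n : ℕ, 1 ≤ n →
      (1/(n:ℝ)) * ∑ k ∈ Finset.range n, ‖ψ ((T ^ k) x) - c‖
      ≤ Real.sqrt ((1/(n:ℝ)) * ∑ k ∈ Finset.range n, (‖ψ ((T ^ k) x) - c‖)^2) := by
    intro n hn
    have hn0 : (0:ℝ) < n := by exact_mod_cast hn
    have hnonneg : (0:ℝ) ≤ (1/(n:ℝ)) * ∑ k ∈ Finset.range n, ‖ψ ((T ^ k) x) - c‖ := by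
      apply mul_nonneg (by positivity)
      exact Finset.sum_nonneg fun k _ => norm_nonneg _
    have hynonneg : (0:ℝ) ≤ (1/(n:ℝ)) * ∑ k ∈ Finset.range n,
        (‖ψ ((T ^ k) x) - c‖)^2 := by
      apply mul_nonneg (by positivity)
      exact Finset.sum_nonneg fun k _ => sq_nonneg _
    rw [Real.le_sqrt hnonneg hynonneg]
    have hcs : (∑ k ∈ Finset.range n, ‖ψ ((T ^ k) x) - c‖)^2
        ≤ (n:ℝ) * ∑ k ∈ Finset.range n, (‖ψ ((T ^ k) x) - c‖)^2 := by
      have := sq_sum_le_card_mul_sum_sq (s := Finset.range n)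
        (f := fun k => ‖ψ ((T ^ k) x) - c‖)
      simpa [Finset.card_range] using this
    calc ((1/(n:ℝ)) * ∑ k ∈ Finset.range n, ‖ψ ((T ^ k) x) - c‖)^2
        = (1/(n:ℝ))^2 * (∑ k ∈ Finset.range n, ‖ψ ((T ^ k) x) - c‖)^2 := by ring
      _ ≤ (1/(n:ℝ))^2 * ((n:ℝ) * ∑ k ∈ Finset.range n, (‖ψ ((T ^ k) x) - c‖)^2) := by
          gcongr
      _ = (1/(n:ℝ)) * ∑ k ∈ Finset.range n, (‖ψ ((T ^ k) x) - c‖)^2 := by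
          field_simp
  have hsq : Tendsto (fun n : ℕ => Real.sqrt ((1/(n:ℝ)) * ∑ k ∈ Finset.range n,
      (‖ψ ((T ^ k) x) - c‖)^2)) atTop (nhds 0) := by
    have h1 := (Real.continuous_sqrt.tendsto 0).comp hg
    rw [Real.sqrt_zero] at h1
    exact h1.congr fun n => rfl
  refine tendsto_of_tendsto_of_tendsto_of_le_of_le' tendsto_const_nhds hsq ?_ ?_
  · filter_upwards with n
    apply mul_nonneg (by positivity)
    exact Finset.sum_nonneg fun k _ => norm_nonneg _
  · filter_upwards [eventually_ge_atTop 1] with n hn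
    exact hbound n hn
end

section
/- Let α ∈ [0,1) be irrational, a = exp(2πiα), and m a fixed positive integer. Then for every strictly weak mixing C*-dynamical system (A, φ, T) and every x ∈ A with φ(x) arbitrary, the weighted averages (1/n)·∑_{k=0}^{n-1} a^{km}·T^k(x) converge in norm to 0. -/
open Filter Finset Real ComplexOrder

section Aux

variable {A : Type*} [NormedRing A] [StarRing A] [CStarRing A] [NormedAlgebra ℂ A]
    [CompleteSpace A] [StarModule ℂ A] [PartialOrder A] [StarOrderedRing A]

/-- A unital completely positive map on a C*-algebra is a contraction. -/
lemma stmt17_contraction [Nontrivial A] (T : A →L[ℂ] A) (hT1 : T 1 = 1)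
    (hTcp : ∀ (n : ℕ) (a b : Fin n → A),
      0 ≤ ∑ i, ∑ j, star (b i) * T (star (a i) * a j) * b j) :
    ∀ z : A, ‖T z‖ ≤ ‖z‖ := by
  letI : CStarAlgebra A :=
    { ‹NormedRing A›, ‹StarRing A›, ‹CompleteSpace A›, ‹CStarRing A›,
      ‹NormedAlgebra ℂ A›, ‹StarModule ℂ A› with }
  -- T is a positive map
  have hpos : ∀ u : A, 0 ≤ u → 0 ≤ T u := by
    intro u hu
    have h := hTcp 1 ![CFC.sqrt u] ![1]
    simp only [Fin.sum_univ_one, Matrix.cons_val_zero, star_one, one_mul, mul_one] at h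
    rwa [(IsSelfAdjoint.of_nonneg (CFC.sqrt_nonneg u)).star_eq, CFC.sqrt_mul_sqrt_self u hu] at h
  -- T fixes real scalars
  have halg : ∀ r : ℝ, T (algebraMap ℝ A r) = algebraMap ℝ A r := by
    intro r
    rw [Algebra.algebraMap_eq_smul_one, ContinuousLinearMap.map_smul_of_tower, hT1]
  -- T preserves self-adjointness
  have hsa : ∀ h : A, IsSelfAdjoint h → IsSelfAdjoint (T h) := by
    intro h hh
    have h0 : -(algebraMap ℝ A ‖h‖) ≤ h := hh.neg_algebraMap_norm_le_self
    have h1 : (0 : A) ≤ h + algebraMap ℝ A ‖h‖ := by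
      have := sub_nonneg.mpr h0
      rwa [sub_neg_eq_add] at this
    have h2 : T h = T (h + algebraMap ℝ A ‖h‖) - algebraMap ℝ A ‖h‖ := by
      rw [map_add, halg]; abel
    have h3 : IsSelfAdjoint (T (h + algebraMap ℝ A ‖h‖)) :=
      IsSelfAdjoint.of_nonneg (hpos _ h1)
    have h4 : IsSelfAdjoint (algebraMap ℝ A ‖h‖) :=
      IsSelfAdjoint.algebraMap A (star_trivial _)
    rw [h2]; exact h3.sub h4
  -- T is star-preserving
  have hstar : ∀ y : A, T (star y) = star (T y) := by
    intro y
    obtain ⟨h, hh⟩ : ∃ h : A, h = ((1 : ℂ)/2) • (y + star y) := ⟨_, rfl⟩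
    obtain ⟨k, hk⟩ : ∃ k : A, k = (-(Complex.I)/2) • (y - star y) := ⟨_, rfl⟩
    have hsh : IsSelfAdjoint h := by
      rw [hh]
      simp only [IsSelfAdjoint, star_smul, star_add, star_star, RCLike.star_def, map_div₀,
        map_one, map_ofNat]
      rw [add_comm]
    have hsk : IsSelfAdjoint k := by
      rw [hk]
      simp only [IsSelfAdjoint, star_smul, star_sub, star_star, RCLike.star_def, map_div₀,
        map_neg, Complex.conj_I, map_ofNat, neg_neg]
      module
    have hyk : star y = h - Complex.I • k := by
      rw [hh, hk, smul_smul]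
      have hI : Complex.I * (-(Complex.I)/2) = (1 : ℂ)/2 := by
        linear_combination (-1/2 : ℂ) * Complex.I_mul_I
      rw [hI]
      module
    have hyk2 : y = h + Complex.I • k := by
      rw [hh, hk, smul_smul]
      have hI : Complex.I * (-(Complex.I)/2) = (1 : ℂ)/2 := by
        linear_combination (-1/2 : ℂ) * Complex.I_mul_I
      rw [hI]
      module
    have e1 : T (star y) = T h - Complex.I • T k := by rw [hyk, map_sub, map_smul]
    have e2 : star (T y) = T h - Complex.I • T k := by
      rw [hyk2, map_add, map_smul, star_add, star_smul, (hsa h hsh).star_eq,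
        (hsa k hsk).star_eq]
      simp [Complex.star_def, Complex.conj_I, sub_eq_add_neg, neg_smul]
    rw [e1, ← e2]
  -- Kadison–Schwarz inequality
  have hKS : ∀ z : A, star (T z) * T z ≤ T (star z * z) := by
    intro z
    have h := hTcp 2 ![1, z] ![-(T z), 1]
    have hexpr : (∑ i, ∑ j, star ((![-(T z), 1] : Fin 2 → A) i) *
          T (star ((![1, z] : Fin 2 → A) i) * (![1, z] : Fin 2 → A) j) *
          (![-(T z), 1] : Fin 2 → A) j)
        = T (star z * z) - star (T z) * T z := by
      simp only [Fin.sum_univ_two, Matrix.cons_val_zero, Matrix.cons_val_one, Matrix.head_cons,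
        star_one, one_mul, mul_one, star_neg]
      rw [hT1, hstar]
      noncomm_ring
    rw [hexpr] at h
    exact sub_nonneg.mp h
  -- conclude
  intro z
  have h1 := hKS z
  have h3 : star z * z ≤ algebraMap ℝ A (‖z‖ ^ 2) := CStarAlgebra.star_mul_le_algebraMap_norm_sq
  have h2 : T (star z * z) ≤ algebraMap ℝ A (‖z‖ ^ 2) := by
    have h5 := hpos _ (sub_nonneg.mpr h3)
    rw [map_sub, halg] at h5
    exact sub_nonneg.mp h5
  have h4 : ‖star (T z) * T z‖ ≤ ‖algebraMap ℝ A (‖z‖ ^ 2)‖ :=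
    CStarAlgebra.norm_le_norm_of_nonneg_of_le (star_mul_self_nonneg _) (h1.trans h2)
  rw [CStarRing.norm_star_mul_self, norm_algebraMap', Real.norm_of_nonneg (sq_nonneg _)] at h4
  nlinarith [norm_nonneg (T z), norm_nonneg z]

end Aux

/-- For a = exp(2πiα) with α irrational and m ≥ 1, the weighted averages
(1/n)∑ a^{km}·T^k(x) converge in norm to 0 for every strictly weak mixing C*-dynamical
system (A, φ, T) and every x ∈ A. -/
theorem stmt17
    (α : ℝ) (hirr : Irrational α) (hα : α ∈ Set.Ico (0 : ℝ) 1)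
    (a : ℂ) (ha : a = Complex.exp (2 * π * α * Complex.I))
    (m : ℕ) (hm : 1 ≤ m)
    {A : Type*} [NormedRing A] [StarRing A] [CStarRing A] [NormedAlgebra ℂ A]
    [CompleteSpace A] [StarModule ℂ A] [PartialOrder A] [StarOrderedRing A]
    (φ : A →L[ℂ] ℂ) (T : A →L[ℂ] A)
    (hφ1 : φ 1 = 1) (hφpos : ∀ x : A, 0 ≤ φ (star x * x))
    (hT1 : T 1 = 1)
    (hTcp : ∀ (n : ℕ) (a b : Fin n → A),
      0 ≤ ∑ i, ∑ j, star (b i) * T (star (a i) * a j) * b j)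
    (hinv : ∀ x : A, φ (T x) = φ x)
    (hmix : ∀ (ψ : A →L[ℂ] ℂ) (x : A),
      Tendsto (fun n : ℕ =>
          (1 / (n : ℝ)) * ∑ k ∈ Finset.range n, ‖ψ ((T ^ k) x) - ψ 1 * φ x‖)
        atTop (nhds 0)) :
    ∀ x : A,
      Tendsto (fun n : ℕ =>
          (1 / (n : ℂ)) • ∑ k ∈ Finset.range n, a ^ (k * m) • (T ^ k) x)
        atTop (nhds 0) := by
  -- A is nontrivial since φ 1 = 1
  have h10 : (1 : A) ≠ 0 := by
    intro h
    rw [h, map_zero] at hφ1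
    exact one_ne_zero hφ1.symm
  haveI : Nontrivial A := nontrivial_of_ne 1 0 h10
  have hcontr := stmt17_contraction T hT1 hTcp
  -- powers of T are contractions
  have hTk : ∀ (k : ℕ) (z : A), ‖(T ^ k) z‖ ≤ ‖z‖ := by
    intro k
    induction k with
    | zero => intro z; simp
    | succ k ih =>
      intro z
      rw [pow_succ, ContinuousLinearMap.mul_apply]
      exact (ih (T z)).trans (hcontr z)
  -- basic facts about a and lam = a^m
  have habs_a : ‖a‖ = 1 := by
    rw [ha]
    have : 2 * (π : ℂ) * (α : ℂ) * Complex.I = ((2 * π * α : ℝ) : ℂ) * Complex.I := by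
      push_cast; ring
    rw [this, Complex.norm_exp_ofReal_mul_I]
  set lam : ℂ := a ^ m with hlam
  have habs : ‖lam‖ = 1 := by rw [hlam, norm_pow, habs_a, one_pow]
  have hlam0 : lam ≠ 0 := by
    intro h; rw [h] at habs; simp at habs
  have hlam_ne : lam ≠ 1 := by
    intro hlam1
    have h1 : Complex.exp ((m : ℂ) * (2 * π * α * Complex.I)) = 1 := by
      rw [Complex.exp_nat_mul, ← ha]; exact hlam1
    obtain ⟨n, hn⟩ := Complex.exp_eq_one_iff.mp h1
    have hπ : (π : ℂ) ≠ 0 := by exact_mod_cast Real.pi_ne_zero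
    have h2πI : (2 * (π : ℂ) * Complex.I) ≠ 0 := by
      simp [hπ, Complex.I_ne_zero]
    have hn' : ((m : ℂ) * (α : ℂ)) * (2 * (π : ℂ) * Complex.I)
        = (n : ℂ) * (2 * (π : ℂ) * Complex.I) := by linear_combination hn
    have hmα : (m : ℂ) * (α : ℂ) = (n : ℂ) := mul_right_cancel₀ h2πI hn'
    have hreal : (m : ℝ) * α = (n : ℝ) := by exact_mod_cast hmα
    have hm0 : (m : ℝ) ≠ 0 := by positivity
    apply hirr
    refine ⟨(n : ℚ) / (m : ℚ), ?_⟩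
    push_cast
    rw [div_eq_iff hm0]
    linarith [hreal]
  -- main argument
  intro x
  rw [NormedAddCommGroup.tendsto_nhds_zero]
  intro ε hε
  by_contra hc
  rw [Filter.not_eventually] at hc
  have hfreq : ∃ᶠ (n : ℕ) in atTop,
      ε ≤ ‖(1 / (n : ℂ)) • ∑ k ∈ Finset.range n, a ^ (k * m) • (T ^ k) x‖ :=
    hc.mono fun n h => not_lt.mp h
  set L : Filter ℕ := atTop ⊓ 𝓟 {n : ℕ | ε ≤ ‖(1 / (n : ℂ)) • ∑ k ∈ Finset.range n,
      a ^ (k * m) • (T ^ k) x‖} with hL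
  haveI hLne : L.NeBot := Filter.frequently_iff_neBot.mp hfreq
  set U : Ultrafilter ℕ := Ultrafilter.of L with hU
  have hUL : (U : Filter ℕ) ≤ L := Ultrafilter.of_le L
  have hUtop : (U : Filter ℕ) ≤ atTop := hUL.trans inf_le_left
  have hUset : {n : ℕ | ε ≤ ‖(1 / (n : ℂ)) • ∑ k ∈ Finset.range n,
      a ^ (k * m) • (T ^ k) x‖} ∈ U :=
    hUL (Filter.mem_inf_of_right (Filter.mem_principal_self _))
  -- norming functionals
  choose ψ hψ1 hψ2 using fun n : ℕ =>
    exists_dual_vector'' ℂ ((1 / (n : ℂ)) • ∑ k ∈ Finset.range n, a ^ (k * m) • (T ^ k) x)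
  -- the weighted dual averages
  set F : A → ℕ → ℂ := fun z n =>
    ψ n ((1 / (n : ℂ)) • ∑ k ∈ Finset.range n, a ^ (k * m) • (T ^ k) z) with hF
  -- norm bound on the averaged elements
  have helt : ∀ (z : A) (n : ℕ),
      ‖(1 / (n : ℂ)) • ∑ k ∈ Finset.range n, a ^ (k * m) • (T ^ k) z‖ ≤ ‖z‖ := by
    intro z n
    rcases Nat.eq_zero_or_pos n with hn | hn
    · simp [hn]
    · rw [norm_smul]
      have hsum : ‖∑ k ∈ Finset.range n, a ^ (k * m) • (T ^ k) z‖ ≤ (n : ℝ) * ‖z‖ := by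
        calc ‖∑ k ∈ Finset.range n, a ^ (k * m) • (T ^ k) z‖
            ≤ ∑ k ∈ Finset.range n, ‖a ^ (k * m) • (T ^ k) z‖ := norm_sum_le _ _
          _ ≤ ∑ _k ∈ Finset.range n, ‖z‖ := by
              refine Finset.sum_le_sum fun k _ => ?_
              rw [norm_smul]
              have h1 : ‖a ^ (k * m)‖ = 1 := by
                rw [norm_pow, habs_a, one_pow]
              rw [h1, one_mul]
              exact hTk k z
          _ = (n : ℝ) * ‖z‖ := by simp [Finset.sum_const, mul_comm]
      have hninv : ‖(1 / (n : ℂ))‖ = 1 / (n : ℝ) := by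
        simp
      rw [hninv]
      calc (1 / (n : ℝ)) * ‖∑ k ∈ Finset.range n, a ^ (k * m) • (T ^ k) z‖
          ≤ (1 / (n : ℝ)) * ((n : ℝ) * ‖z‖) := by
            apply mul_le_mul_of_nonneg_left hsum
            positivity
        _ = ‖z‖ := by
            field_simp
  have hFb : ∀ (z : A) (n : ℕ), ‖F z n‖ ≤ ‖z‖ := by
    intro z n
    calc ‖F z n‖ ≤ ‖ψ n‖ * ‖(1 / (n : ℂ)) • ∑ k ∈ Finset.range n, a ^ (k * m) • (T ^ k) z‖ :=
          (ψ n).le_opNorm _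
      _ ≤ 1 * ‖z‖ := mul_le_mul (hψ1 n) (helt z n) (norm_nonneg _) zero_le_one
      _ = ‖z‖ := one_mul _
  -- ultrafilter limits exist
  have hlim : ∀ z : A, ∃ c : ℂ, Tendsto (F z) (U : Filter ℕ) (nhds c) := by
    intro z
    have hmem : Metric.closedBall (0 : ℂ) ‖z‖ ∈ Filter.map (F z) (U : Filter ℕ) :=
      Filter.mem_map.mpr (Filter.univ_mem' fun n => by
        simpa [Metric.mem_closedBall, dist_zero_right] using hFb z n)
    obtain ⟨c, -, hc⟩ := (isCompact_closedBall (0 : ℂ) ‖z‖).ultrafilter_le_nhds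
      (U.map (F z)) (Filter.le_principal_iff.mpr (by rwa [Ultrafilter.coe_map]))
    refine ⟨c, ?_⟩
    rwa [Ultrafilter.coe_map] at hc
  choose g hg using hlim
  -- g is linear and bounded
  have hF_add : ∀ (y z : A) (n : ℕ), F (y + z) n = F y n + F z n := by
    intro y z n
    show ψ n _ = _
    rw [show (∑ k ∈ Finset.range n, a ^ (k * m) • (T ^ k) (y + z))
        = (∑ k ∈ Finset.range n, a ^ (k * m) • (T ^ k) y)
          + ∑ k ∈ Finset.range n, a ^ (k * m) • (T ^ k) z by
      rw [← Finset.sum_add_distrib]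
      exact Finset.sum_congr rfl fun k _ => by rw [map_add, smul_add]]
    rw [smul_add, map_add]
  have hF_smul : ∀ (c : ℂ) (z : A) (n : ℕ), F (c • z) n = c * F z n := by
    intro c z n
    show ψ n _ = _
    rw [show (∑ k ∈ Finset.range n, a ^ (k * m) • (T ^ k) (c • z))
        = c • ∑ k ∈ Finset.range n, a ^ (k * m) • (T ^ k) z by
      rw [Finset.smul_sum]
      exact Finset.sum_congr rfl fun k _ => by rw [map_smul, smul_comm]]
    rw [smul_comm, map_smul, smul_eq_mul]
  have hgadd : ∀ y z : A, g (y + z) = g y + g z := by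
    intro y z
    have h1 : Tendsto (fun n => F y n + F z n) (U : Filter ℕ) (nhds (g y + g z)) :=
      (hg y).add (hg z)
    have h2 : Tendsto (F (y + z)) (U : Filter ℕ) (nhds (g y + g z)) := by
      refine h1.congr fun n => ?_
      rw [hF_add]
    exact tendsto_nhds_unique (hg (y + z)) h2
  have hgsmul : ∀ (c : ℂ) (z : A), g (c • z) = c * g z := by
    intro c z
    have h1 : Tendsto (fun n => c * F z n) (U : Filter ℕ) (nhds (c * g z)) :=
      (hg z).const_mul c
    have h2 : Tendsto (F (c • z)) (U : Filter ℕ) (nhds (c * g z)) := by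
      refine h1.congr fun n => ?_
      rw [hF_smul]
    exact tendsto_nhds_unique (hg (c • z)) h2
  have hgb : ∀ z : A, ‖g z‖ ≤ ‖z‖ := by
    intro z
    exact le_of_tendsto' (hg z).norm fun n => hFb z n
  -- key eigenvector identity : lam * g (T z) = g z
  have hkey : ∀ z : A, lam * g (T z) = g z := by
    intro z
    have hshift : ∀ n : ℕ, lam * F (T z) n - F z n
        = ψ n ((1 / (n : ℂ)) • (a ^ (n * m) • (T ^ n) z - z)) := by
      intro n
      have e1 : lam * F (T z) n
          = ψ n ((1 / (n : ℂ)) • ∑ k ∈ Finset.range n, a ^ ((k + 1) * m) • (T ^ (k + 1)) z) := by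
        rw [hF]
        rw [← smul_eq_mul, ← map_smul, smul_comm]
        congr 2
        rw [Finset.smul_sum]
        refine Finset.sum_congr rfl fun k _ => ?_
        rw [smul_smul, hlam, ← pow_add]
        have hexp : m + k * m = (k + 1) * m := by ring
        rw [hexp, pow_succ, ContinuousLinearMap.mul_apply]
      have e2 : (∑ k ∈ Finset.range n, a ^ ((k + 1) * m) • (T ^ (k + 1)) z)
          = (∑ k ∈ Finset.range n, a ^ (k * m) • (T ^ k) z) + a ^ (n * m) • (T ^ n) z - z := by
        have h1 := Finset.sum_range_succ (fun k => a ^ (k * m) • (T ^ k) z) n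
        have h2 := Finset.sum_range_succ' (fun k => a ^ (k * m) • (T ^ k) z) n
        have hcomb : (∑ k ∈ Finset.range n, a ^ ((k + 1) * m) • (T ^ (k + 1)) z)
            + a ^ (0 * m) • (T ^ 0) z
            = (∑ k ∈ Finset.range n, a ^ (k * m) • (T ^ k) z) + a ^ (n * m) • (T ^ n) z := by
          rw [← h1, ← h2]
        have h0 : a ^ (0 * m) • (T ^ 0) z = z := by simp
        rw [h0] at hcomb
        rw [← hcomb]
        abel
      rw [e1, e2, ← map_sub, ← smul_sub]
      congr 2
      abel
    have hbnd : ∀ n : ℕ, ‖lam * F (T z) n - F z n‖ ≤ 2 * ‖z‖ / (n : ℝ) := by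
      intro n
      rcases Nat.eq_zero_or_pos n with hn | hn
      · subst hn
        simp [hF]
      · rw [hshift n]
        calc ‖ψ n ((1 / (n : ℂ)) • (a ^ (n * m) • (T ^ n) z - z))‖
            ≤ 1 * ‖(1 / (n : ℂ)) • (a ^ (n * m) • (T ^ n) z - z)‖ := by
              refine ((ψ n).le_opNorm _).trans ?_
              exact mul_le_mul_of_nonneg_right (hψ1 n) (norm_nonneg _)
          _ = ‖(1 / (n : ℂ))‖ * ‖a ^ (n * m) • (T ^ n) z - z‖ := by rw [one_mul, norm_smul]
          _ ≤ (1 / (n : ℝ)) * (2 * ‖z‖) := by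
              have hninv : ‖(1 / (n : ℂ))‖ = 1 / (n : ℝ) := by simp
              rw [hninv]
              refine mul_le_mul_of_nonneg_left ?_ (by positivity)
              refine (norm_sub_le _ _).trans ?_
              have h1 : ‖a ^ (n * m) • (T ^ n) z‖ ≤ ‖z‖ := by
                rw [norm_smul]
                have : ‖a ^ (n * m)‖ = 1 := by
                  rw [norm_pow, habs_a, one_pow]
                rw [this, one_mul]
                exact hTk n z
              linarith
          _ = 2 * ‖z‖ / (n : ℝ) := by ring
    have hDtend : Tendsto (fun n => lam * F (T z) n - F z n) atTop (nhds 0) :=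
      squeeze_zero_norm hbnd (tendsto_const_div_atTop_nhds_zero_nat (2 * ‖z‖))
    have hDU : Tendsto (fun n => lam * F (T z) n - F z n) (U : Filter ℕ) (nhds 0) :=
      hDtend.mono_left hUtop
    have h2 : Tendsto (fun n => lam * F (T z) n - F z n) (U : Filter ℕ)
        (nhds (lam * g (T z) - g z)) := ((hg (T z)).const_mul lam).sub (hg z)
    have h3 := tendsto_nhds_unique h2 hDU
    exact sub_eq_zero.mp h3
  -- the limit functional as a continuous linear map
  set gL : A →ₗ[ℂ] ℂ :=
    { toFun := g, map_add' := hgadd, map_smul' := fun c z => by simpa using hgsmul c z } with hgL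
  set rho : A →L[ℂ] ℂ := LinearMap.mkContinuous gL 1 (fun z => by rw [one_mul]; exact hgb z) with hrho
  have hrho_apply : ∀ z : A, rho z = g z := fun z => rfl
  -- g vanishes at 1
  have hg1 : g (1 : A) = 0 := by
    have h1 := hkey 1
    rw [hT1] at h1
    have h2 : (lam - 1) * g (1 : A) = 0 := by linear_combination h1
    rcases mul_eq_zero.mp h2 with h3 | h3
    · exact absurd (sub_eq_zero.mp h3) hlam_ne
    · exact h3
  -- g on iterates
  have hgT : ∀ z : A, g (T z) = lam⁻¹ * g z := by
    intro z
    rw [← hkey z, inv_mul_cancel_left₀ hlam0]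
  have hiter : ∀ k : ℕ, g ((T ^ k) x) = lam⁻¹ ^ k * g x := by
    intro k
    induction k with
    | zero => simp
    | succ k ih =>
      rw [pow_succ' T k, ContinuousLinearMap.mul_apply, hgT, ih, pow_succ']
      ring
  -- lower bound for |g x|
  have hgx : ε ≤ ‖g x‖ := by
    refine ge_of_tendsto (hg x).norm ?_
    filter_upwards [hUset] with n hn
    have h1 : F x n = (‖(1 / (n : ℂ)) • ∑ k ∈ Finset.range n, a ^ (k * m) • (T ^ k) x‖ : ℂ) :=
      hψ2 n
    rw [h1, Complex.norm_real, Real.norm_of_nonneg (norm_nonneg _)]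
    exact hn
  -- the mixing hypothesis forces g x = 0
  have hfin : ∀ᶠ (n : ℕ) in atTop,
      (1 / (n : ℝ)) * ∑ k ∈ Finset.range n, ‖rho ((T ^ k) x) - rho 1 * φ x‖
        = ‖g x‖ := by
    filter_upwards [eventually_ge_atTop 1] with n hn
    have hterm : ∀ k ∈ Finset.range n,
        ‖rho ((T ^ k) x) - rho 1 * φ x‖ = ‖g x‖ := by
      intro k _
      rw [hrho_apply, hrho_apply, hg1, zero_mul, sub_zero, hiter, norm_mul, norm_pow,
        norm_inv, habs, inv_one, one_pow, one_mul]
    rw [Finset.sum_congr rfl hterm, Finset.sum_const, Finset.card_range, nsmul_eq_mul]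
    have hn0 : (n : ℝ) ≠ 0 := by positivity
    field_simp
  have habs0 : ‖g x‖ = 0 := by
    have h1 : Tendsto (fun _ : ℕ => ‖g x‖) atTop (nhds 0) :=
      ((hmix rho x).congr' hfin)
    exact tendsto_nhds_unique tendsto_const_nhds h1
  rw [habs0] at hgx
  linarith
end
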